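/- arXiv:2507.03786 — 2 statements merged into one kernel-verified Lean document; each statement's English description precedes it below -/
import Mathlib

section
/- Let V be a finite set, k an integer, μ = ⌈(k−3)/2⌉, U ⊆ V, I and H multigraphs on V, and G = (V, E) a multigraph with x : E → ℝ, x_e ≥ 0 for all e. For disjoint S, T ⊆ V let ψ(S,T) = d_I(S,T) + 2·d_H(S,T) + x(δ_E(S,T)) and ψ(S) = ψ(S, V\S). Assume: (1) ψ(S) ≥ k − 2 for every cut S with S = {w} or V\S = {w} for some w ∈ U, and ψ(S) ≥ k for every other cut S; (2) d_H(w) ≤ 1 and d_I(w) + 2·d_H(w) ≥ k − 2 for every w ∈ U; (3) A and B are crossing cuts with ψ(A) = ψ(B) = k, A∩B = {u} and A\B = {v}, where u, v ∈ U; (4) d_H(u,v) = 1 and d_I(u,v) ≥ μ; (5) d_I(B) + 2·d_H(B) ≤ k − 1. Then there exists w ∈ U such that either ((V\A)∩B = {w}, d_H(u,w) = 0, and 2·d_I(u,w) ≥ k − 3), or ((V\A)\B = {w}, d_H(v,w) = 0, and 2·d_I(v,w) ≥ k − 3). -/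
open Finset

variable {V : Type*} [Fintype V] [DecidableEq V]

/-- `d_m(S,T)`: total multiplicity of edges of the multigraph `m` with one end in `S` and
the other in `T` (for disjoint `S`, `T`). -/
def dBetween (m : V → V → ℕ) (S T : Finset V) : ℕ := ∑ u ∈ S, ∑ v ∈ T, m u v

/-- `d_m(S) = d_m(S, V \ S)`. -/
def degS (m : V → V → ℕ) (S : Finset V) : ℕ := dBetween m S Sᶜ

variable {E : Type*} [Fintype E] [DecidableEq E]

/-- Edges of the edge-indexed multigraph `(V, E)` (endpoint map `ends`) with one endpoint
in `S` and the other in `T` (for disjoint `S`, `T`). -/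
def betweenEdges (ends : E → V × V) (S T : Finset V) : Finset E :=
  univ.filter fun e => ((ends e).1 ∈ S ∧ (ends e).2 ∈ T) ∨ ((ends e).1 ∈ T ∧ (ends e).2 ∈ S)

/-- `ψ(S,T) = d_I(S,T) + 2 d_H(S,T) + x(δ_E(S,T))`. -/
def psi (I H : V → V → ℕ) (ends : E → V × V) (x : E → ℝ) (S T : Finset V) : ℝ :=
  (dBetween I S T : ℝ) + 2 * (dBetween H S T : ℝ) + ∑ e ∈ betweenEdges ends S T, x e

/-- `ψ(S) = ψ(S, V \ S)`. -/
def psiS (I H : V → V → ℕ) (ends : E → V × V) (x : E → ℝ) (S : Finset V) : ℝ :=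
  psi I H ends x S Sᶜ
set_option linter.unusedSectionVars false

section Helpers

variable {I H : V → V → ℕ} {ends : E → V × V} {x : E → ℝ}

lemma dBetween_union_left' (m : V → V → ℕ) (S₁ S₂ T : Finset V) (h : Disjoint S₁ S₂) :
    dBetween m (S₁ ∪ S₂) T = dBetween m S₁ T + dBetween m S₂ T :=
  Finset.sum_union h

lemma dBetween_comm' (m : V → V → ℕ) (hm : ∀ a b, m a b = m b a) (S T : Finset V) :
    dBetween m S T = dBetween m T S := by
  unfold dBetween
  rw [Finset.sum_comm]
  exact Finset.sum_congr rfl fun b _ => Finset.sum_congr rfl fun a _ => hm a b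

lemma betweenEdges_union_left' (ends : E → V × V) (S₁ S₂ T : Finset V) :
    betweenEdges ends (S₁ ∪ S₂) T = betweenEdges ends S₁ T ∪ betweenEdges ends S₂ T := by
  ext e
  simp only [betweenEdges, mem_filter, Finset.mem_union, mem_univ, true_and]
  tauto

lemma betweenEdges_comm' (ends : E → V × V) (S T : Finset V) :
    betweenEdges ends S T = betweenEdges ends T S := by
  ext e
  simp only [betweenEdges, mem_filter]
  tauto

lemma betweenEdges_disj (ends : E → V × V) {S₁ S₂ T : Finset V}
    (h12 : Disjoint S₁ S₂) (h1 : Disjoint S₁ T) (h2 : Disjoint S₂ T) :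
    Disjoint (betweenEdges ends S₁ T) (betweenEdges ends S₂ T) := by
  rw [Finset.disjoint_left]
  intro e he1 he2
  simp only [betweenEdges, mem_filter, mem_univ, true_and] at he1 he2
  have h12' := Finset.disjoint_left.mp h12
  have h1' := Finset.disjoint_left.mp h1
  have h2' := Finset.disjoint_left.mp h2
  tauto

lemma psi_nonneg' (hx : ∀ e, 0 ≤ x e) (S T : Finset V) : 0 ≤ psi I H ends x S T := by
  unfold psi
  have h1 : (0:ℝ) ≤ (dBetween I S T : ℝ) := Nat.cast_nonneg _
  have h2 : (0:ℝ) ≤ (dBetween H S T : ℝ) := Nat.cast_nonneg _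
  have h3 : (0:ℝ) ≤ ∑ e ∈ betweenEdges ends S T, x e := Finset.sum_nonneg fun e _ => hx e
  linarith

lemma psi_comm' (hI : ∀ a b, I a b = I b a) (hH : ∀ a b, H a b = H b a) (S T : Finset V) :
    psi I H ends x S T = psi I H ends x T S := by
  unfold psi
  rw [dBetween_comm' I hI, dBetween_comm' H hH, betweenEdges_comm']

lemma psi_union_left' {S₁ S₂ T : Finset V}
    (h12 : Disjoint S₁ S₂) (h1 : Disjoint S₁ T) (h2 : Disjoint S₂ T) :
    psi I H ends x (S₁ ∪ S₂) T = psi I H ends x S₁ T + psi I H ends x S₂ T := by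
  unfold psi
  rw [dBetween_union_left' _ _ _ _ h12, dBetween_union_left' _ _ _ _ h12,
    betweenEdges_union_left', Finset.sum_union (betweenEdges_disj ends h12 h1 h2)]
  push_cast
  ring

lemma psi_union_right' {S T₁ T₂ : Finset V}
    (h12 : Disjoint T₁ T₂) (h1 : Disjoint T₁ S) (h2 : Disjoint T₂ S)
    (hI : ∀ a b, I a b = I b a) (hH : ∀ a b, H a b = H b a) :
    psi I H ends x S (T₁ ∪ T₂) = psi I H ends x S T₁ + psi I H ends x S T₂ := by
  rw [psi_comm' hI hH, psi_union_left' h12 h1 h2, psi_comm' hI hH T₁ S, psi_comm' hI hH T₂ S]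

lemma psi_split {P Q R S : Finset V}
    (hI : ∀ a b, I a b = I b a) (hH : ∀ a b, H a b = H b a)
    (hPQ : Disjoint P Q) (hPR : Disjoint P R) (hPS : Disjoint P S)
    (hQR : Disjoint Q R) (hQS : Disjoint Q S) (hRS : Disjoint R S) :
    psi I H ends x (P ∪ Q) (R ∪ S) =
      psi I H ends x P R + psi I H ends x P S + psi I H ends x Q R + psi I H ends x Q S := by
  rw [psi_union_left' hPQ (Finset.disjoint_union_right.mpr ⟨hPR, hPS⟩)
      (Finset.disjoint_union_right.mpr ⟨hQR, hQS⟩),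
    psi_union_right' hRS hPR.symm hPS.symm hI hH,
    psi_union_right' hRS hQR.symm hQS.symm hI hH]
  ring

lemma psi_singleton_ge (hx : ∀ e, 0 ≤ x e) (p q : V) :
    (I p q : ℝ) + 2 * (H p q : ℝ) ≤ psi I H ends x {p} {q} := by
  unfold psi
  have h1 : dBetween I {p} {q} = I p q := by simp [dBetween]
  have h2 : dBetween H {p} {q} = H p q := by simp [dBetween]
  have h3 : (0:ℝ) ≤ ∑ e ∈ betweenEdges ends {p} {q}, x e := Finset.sum_nonneg fun e _ => hx e
  rw [h1, h2]
  linarith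

lemma degS_singleton' (m : V → V → ℕ) (p : V) :
    degS m {p} = ∑ b ∈ ({p} : Finset V)ᶜ, m p b := by
  simp [degS, dBetween]

lemma degS_pair' (m : V → V → ℕ) (hm : ∀ a b, m a b = m b a) {p q : V} (hpq : p ≠ q) :
    degS m {p} + degS m {q} = degS m {p, q} + 2 * m p q := by
  have hqmem : q ∉ ({p, q} : Finset V)ᶜ := by simp
  have hpmem : p ∉ ({p, q} : Finset V)ᶜ := by simp
  have hcp : ({p} : Finset V)ᶜ = insert q ({p, q} : Finset V)ᶜ := by
    ext a
    by_cases h1 : a = p <;> by_cases h2 : a = q <;> simp [h1, h2, hpq, Ne.symm hpq]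
  have hcq : ({q} : Finset V)ᶜ = insert p ({p, q} : Finset V)ᶜ := by
    ext a
    by_cases h1 : a = p <;> by_cases h2 : a = q <;> simp [h1, h2, hpq, Ne.symm hpq]
  have hP : degS m {p, q} = (∑ b ∈ ({p, q} : Finset V)ᶜ, m p b)
      + ∑ b ∈ ({p, q} : Finset V)ᶜ, m q b := by
    unfold degS dBetween
    rw [Finset.sum_pair hpq]
  rw [degS_singleton', degS_singleton', hcp, hcq, Finset.sum_insert hqmem,
    Finset.sum_insert hpmem, hP, hm q p]
  ring

lemma degS_compl' (m : V → V → ℕ) (hm : ∀ a b, m a b = m b a) (S : Finset V) :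
    degS m Sᶜ = degS m S := by
  unfold degS
  rw [compl_compl, dBetween_comm' m hm]

lemma H_eq_zero {H : V → V → ℕ} {p q r : V} (hdeg : degS H {p} ≤ 1) (hq : H p q = 1)
    (hqr : q ≠ r) (hqp : q ≠ p) (hrp : r ≠ p) : H p r = 0 := by
  have hsub : ({q, r} : Finset V) ⊆ ({p} : Finset V)ᶜ := by
    intro a ha
    simp only [Finset.mem_insert, Finset.mem_singleton] at ha
    simp only [Finset.mem_compl, Finset.mem_singleton]
    rcases ha with rfl | rfl
    · exact hqp
    · exact hrp
  have hle := Finset.sum_le_sum_of_subset (f := fun b => H p b) hsub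
  rw [Finset.sum_pair hqr] at hle
  rw [degS_singleton'] at hdeg
  have hle' : H p q + H p r ≤ ∑ b ∈ ({p} : Finset V)ᶜ, H p b := hle
  omega

end Helpers

/-- Lemma 4.5: if `d_H(u,v) = 1` then there is an "alternative" node `w ∈ U` in
`(V \ A) ∩ B` or in `(V \ A) \ B` such that a ghost edge `uw` or `vw` can be added. -/
theorem alternative_ghost_edge_node
    (k : ℤ) (μ : ℤ) (hμ : μ = ⌈((k : ℚ) - 3) / 2⌉)
    (U : Finset V) (I H : V → V → ℕ)
    (hIsymm : ∀ a b, I a b = I b a) (hHsymm : ∀ a b, H a b = H b a)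
    (ends : E → V × V) (x : E → ℝ) (hx : ∀ e, 0 ≤ x e)
    (hpsi1 : ∀ S : Finset V, S.Nonempty → S ≠ univ →
      (∃ w ∈ U, S = {w} ∨ Sᶜ = {w}) → (k : ℝ) - 2 ≤ psiS I H ends x S)
    (hpsi2 : ∀ S : Finset V, S.Nonempty → S ≠ univ →
      ¬ (∃ w ∈ U, S = {w} ∨ Sᶜ = {w}) → (k : ℝ) ≤ psiS I H ends x S)
    (hU1 : ∀ w ∈ U, degS H {w} ≤ 1)
    (hU2 : ∀ w ∈ U, k - 2 ≤ (degS I {w} : ℤ) + 2 * (degS H {w} : ℤ))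
    (u v : V) (hu : u ∈ U) (hv : v ∈ U)
    (A B : Finset V)
    (hcross : (A ∩ B).Nonempty ∧ (A \ B).Nonempty ∧ (B \ A).Nonempty ∧ ((A ∪ B)ᶜ).Nonempty)
    (hpsiA : psiS I H ends x A = (k : ℝ)) (hpsiB : psiS I H ends x B = (k : ℝ))
    (hAB : A ∩ B = {u}) (hAdB : A \ B = {v})
    (hHuv : H u v = 1) (hIuv : μ ≤ (I u v : ℤ))
    (hfB : (degS I B : ℤ) + 2 * (degS H B : ℤ) ≤ k - 1) :
    ∃ w ∈ U,
      (Aᶜ ∩ B = {w} ∧ H u w = 0 ∧ k - 3 ≤ 2 * (I u w : ℤ)) ∨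
      (Aᶜ \ B = {w} ∧ H v w = 0 ∧ k - 3 ≤ 2 * (I v w : ℤ)) := by
  obtain ⟨hABne, hAdBne, hBdAne, hDne⟩ := hcross
  -- basic memberships
  have huA : u ∈ A ∧ u ∈ B := by
    have : u ∈ A ∩ B := by rw [hAB]; exact mem_singleton_self u
    exact mem_inter.mp this
  have hvA : v ∈ A ∧ v ∉ B := by
    have : v ∈ A \ B := by rw [hAdB]; exact mem_singleton_self v
    exact mem_sdiff.mp this
  have huv : u ≠ v := fun h => hvA.2 (h ▸ huA.2)
  set C : Finset V := B \ A with hCdef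
  set D : Finset V := (A ∪ B)ᶜ with hDdef
  have hmemA : ∀ a, a ∈ A ↔ a = u ∨ a = v := by
    intro a
    constructor
    · intro ha
      by_cases hb : a ∈ B
      · left
        have : a ∈ A ∩ B := mem_inter.mpr ⟨ha, hb⟩
        rw [hAB] at this; exact mem_singleton.mp this
      · right
        have : a ∈ A \ B := mem_sdiff.mpr ⟨ha, hb⟩
        rw [hAdB] at this; exact mem_singleton.mp this
    · rintro (rfl | rfl)
      · exact huA.1
      · exact hvA.1
  have hmemC : ∀ a, a ∈ C ↔ a ∈ B ∧ a ∉ A := fun a => mem_sdiff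
  have hmemD : ∀ a, a ∈ D ↔ a ∉ A ∧ a ∉ B := by
    intro a
    rw [hDdef, mem_compl, Finset.mem_union]
    tauto
  -- set identities
  have hAeq : A = {u} ∪ {v} := by
    ext a
    simp only [hmemA a, Finset.mem_union, mem_singleton]
  have hAc : Aᶜ = C ∪ D := by
    ext a
    simp only [mem_compl, Finset.mem_union, hmemC a, hmemD a]
    tauto
  have hBeq : B = {u} ∪ C := by
    ext a
    simp only [Finset.mem_union, mem_singleton, hmemC a]
    constructor
    · intro hb
      by_cases ha : a ∈ A
      · left
        have : a ∈ A ∩ B := mem_inter.mpr ⟨ha, hb⟩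
        rw [hAB] at this; exact mem_singleton.mp this
      · right; exact ⟨hb, ha⟩
    · rintro (rfl | ⟨h, _⟩)
      · exact huA.2
      · exact h
  have hBc : Bᶜ = {v} ∪ D := by
    ext a
    simp only [mem_compl, Finset.mem_union, mem_singleton, hmemD a]
    constructor
    · intro hb
      by_cases ha : a ∈ A
      · left
        rcases (hmemA a).mp ha with rfl | rfl
        · exact absurd huA.2 hb
        · rfl
      · right; exact ⟨ha, hb⟩
    · rintro (rfl | ⟨_, h⟩)
      · exact hvA.2
      · exact h
  have hCc : Cᶜ = ({u} ∪ {v}) ∪ D := by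
    ext a
    simp only [mem_compl, Finset.mem_union, mem_singleton, hmemC a, hmemD a, hmemA a]
    tauto
  have hDc : Dᶜ = ({u} ∪ {v}) ∪ C := by
    ext a
    simp only [mem_compl, Finset.mem_union, mem_singleton, hmemC a, hmemD a, hmemA a]
    tauto
  -- disjointness
  have duv : Disjoint ({u} : Finset V) {v} := by
    rw [Finset.disjoint_left]
    intro a ha hb
    rw [mem_singleton] at ha hb
    exact huv (ha ▸ hb ▸ rfl)
  have duC : Disjoint ({u} : Finset V) C := by
    rw [Finset.disjoint_left]
    intro a ha hc
    rw [mem_singleton] at ha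
    rw [ha] at hc
    exact ((hmemC u).mp hc).2 huA.1
  have duD : Disjoint ({u} : Finset V) D := by
    rw [Finset.disjoint_left]
    intro a ha hc
    rw [mem_singleton] at ha
    rw [ha] at hc
    exact ((hmemD u).mp hc).1 huA.1
  have dvC : Disjoint ({v} : Finset V) C := by
    rw [Finset.disjoint_left]
    intro a ha hc
    rw [mem_singleton] at ha
    rw [ha] at hc
    exact ((hmemC v).mp hc).2 hvA.1
  have dvD : Disjoint ({v} : Finset V) D := by
    rw [Finset.disjoint_left]
    intro a ha hc
    rw [mem_singleton] at ha
    rw [ha] at hc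
    exact ((hmemD v).mp hc).1 hvA.1
  have dCD : Disjoint C D := by
    rw [Finset.disjoint_left]
    intro a hc hd
    exact ((hmemD a).mp hd).2 ((hmemC a).mp hc).1
  -- psi expansions
  have eA : psiS I H ends x A = psi I H ends x {u} C + psi I H ends x {u} D
      + psi I H ends x {v} C + psi I H ends x {v} D := by
    unfold psiS
    rw [hAc, hAeq, psi_split hIsymm hHsymm duv duC duD dvC dvD dCD]
  have eB : psiS I H ends x B = psi I H ends x {u} {v} + psi I H ends x {u} D
      + psi I H ends x {v} C + psi I H ends x C D := by
    unfold psiS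
    rw [hBc, hBeq, psi_split hIsymm hHsymm duC duv duD dvC.symm dCD dvD,
      psi_comm' hIsymm hHsymm C {v}]
  have eC : psiS I H ends x C = psi I H ends x {u} C + psi I H ends x {v} C
      + psi I H ends x C D := by
    unfold psiS
    rw [psi_comm' hIsymm hHsymm C Cᶜ, hCc,
      psi_union_left' (Finset.disjoint_union_left.mpr ⟨duD, dvD⟩)
        (Finset.disjoint_union_left.mpr ⟨duC, dvC⟩) dCD.symm,
      psi_union_left' duv duC dvC, psi_comm' hIsymm hHsymm D C]
  have eD : psiS I H ends x D = psi I H ends x {u} D + psi I H ends x {v} D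
      + psi I H ends x C D := by
    unfold psiS
    rw [psi_comm' hIsymm hHsymm D Dᶜ, hDc,
      psi_union_left' (Finset.disjoint_union_left.mpr ⟨duC, dvC⟩)
        (Finset.disjoint_union_left.mpr ⟨duD, dvD⟩) dCD,
      psi_union_left' duv duD dvD]
  -- nonnegativity and the key lower bound on psi {u} {v}
  have nb := psi_nonneg' (I := I) (H := H) (ends := ends) hx ({u} : Finset V) C
  have nc := psi_nonneg' (I := I) (H := H) (ends := ends) hx ({u} : Finset V) D
  have nd := psi_nonneg' (I := I) (H := H) (ends := ends) hx ({v} : Finset V) C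
  have ne' := psi_nonneg' (I := I) (H := H) (ends := ends) hx ({v} : Finset V) D
  have ng := psi_nonneg' (I := I) (H := H) (ends := ends) hx C D
  have hμ2 : (k : ℤ) - 3 ≤ 2 * μ := by
    have h := Int.le_ceil (((k : ℚ) - 3) / 2)
    rw [← hμ] at h
    have h2 : ((k : ℚ)) - 3 ≤ 2 * (μ : ℚ) := by linarith
    exact_mod_cast h2
  have hka : (k : ℝ) + 1 ≤ 2 * psi I H ends x {u} {v} := by
    have h1 := psi_singleton_ge (I := I) (H := H) (ends := ends) hx u v
    have h2 : (μ : ℝ) ≤ (I u v : ℝ) := by exact_mod_cast hIuv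
    have h3 : ((k : ℝ)) - 3 ≤ 2 * (μ : ℝ) := by exact_mod_cast hμ2
    rw [hHuv] at h1
    push_cast at h1
    linarith
  -- case analysis on whether C is a small cut
  by_cases hsing : ∃ w ∈ U, C = {w} ∨ Cᶜ = {w}
  · -- C = {w}: conclusion via B = {u, w}
    obtain ⟨w, hwU, hw⟩ := hsing
    have hCw : C = {w} := by
      rcases hw with h | h
      · exact h
      · exfalso
        have hu' : u ∈ Cᶜ := mem_compl.mpr (fun hc => ((hmemC u).mp hc).2 huA.1)
        have hv' : v ∈ Cᶜ := mem_compl.mpr (fun hc => ((hmemC v).mp hc).2 hvA.1)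
        rw [h, mem_singleton] at hu' hv'
        exact huv (hu'.trans hv'.symm)
    have hwC : w ∈ C := by rw [hCw]; exact mem_singleton_self w
    have hwu : u ≠ w := fun h => ((hmemC w).mp hwC).2 (h ▸ huA.1)
    have hwv : v ≠ w := fun h => hvA.2 (h ▸ ((hmemC w).mp hwC).1)
    have hBuw : B = {u, w} := by
      rw [hBeq, hCw]
      rfl
    have hH0 : H u w = 0 :=
      H_eq_zero (hU1 u hu) hHuv hwv (Ne.symm huv) (fun h => hwu h.symm)
    have hIp := degS_pair' I hIsymm hwu
    have hHp := degS_pair' H hHsymm hwu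
    have hfB' : (degS I {u, w} : ℤ) + 2 * (degS H {u, w} : ℤ) ≤ k - 1 := by
      rw [← hBuw]; exact hfB
    have h1 := hU2 u hu
    have h2 := hU2 w hwU
    refine ⟨w, hwU, Or.inl ⟨?_, hH0, ?_⟩⟩
    · have hACB : Aᶜ ∩ B = C := by
        ext a
        simp only [mem_inter, mem_compl, hmemC a]
        tauto
      rw [hACB, hCw]
    · omega
  · -- C is not a small cut, so psiS C ≥ k and D must be a singleton {w}
    have hCuniv : C ≠ univ := by
      intro h
      have : v ∈ C := h ▸ mem_univ v
      exact ((hmemC v).mp this).2 hvA.1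
    have hψC := hpsi2 C hBdAne hCuniv hsing
    have hψD : psiS I H ends x D < (k : ℝ) := by
      rw [eD]
      rw [eC] at hψC
      rw [eA] at hpsiA
      rw [eB] at hpsiB
      linarith
    have hDuniv : D ≠ univ := by
      intro h
      have : u ∈ D := h ▸ mem_univ u
      exact ((hmemD u).mp this).1 huA.1
    have hsingD : ∃ w ∈ U, D = {w} ∨ Dᶜ = {w} := by
      by_contra h
      exact absurd (hpsi2 D hDne hDuniv h) (by linarith)
    obtain ⟨w, hwU, hw⟩ := hsingD
    have hDw : D = {w} := by
      rcases hw with h | h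
      · exact h
      · exfalso
        have hu' : u ∈ Dᶜ := mem_compl.mpr (fun hc => ((hmemD u).mp hc).1 huA.1)
        have hv' : v ∈ Dᶜ := mem_compl.mpr (fun hc => ((hmemD v).mp hc).1 hvA.1)
        rw [h, mem_singleton] at hu' hv'
        exact huv (hu'.trans hv'.symm)
    have hwD : w ∈ D := by rw [hDw]; exact mem_singleton_self w
    have hwu : u ≠ w := fun h => ((hmemD w).mp hwD).1 (h ▸ huA.1)
    have hwv : v ≠ w := fun h => ((hmemD w).mp hwD).1 (h ▸ hvA.1)
    have hBcvw : Bᶜ = {v, w} := by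
      rw [hBc, hDw]
      rfl
    have hHvu : H v u = 1 := by rw [hHsymm v u]; exact hHuv
    have hH0 : H v w = 0 :=
      H_eq_zero (hU1 v hv) hHvu hwu huv (fun h => hwv h.symm)
    have hIp := degS_pair' I hIsymm hwv
    have hHp := degS_pair' H hHsymm hwv
    have hfB' : (degS I {v, w} : ℤ) + 2 * (degS H {v, w} : ℤ) ≤ k - 1 := by
      rw [← hBcvw, degS_compl' I hIsymm, degS_compl' H hHsymm]
      exact hfB
    have h1 := hU2 v hv
    have h2 := hU2 w hwU
    refine ⟨w, hwU, Or.inr ⟨?_, hH0, ?_⟩⟩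
    · have hACB : Aᶜ \ B = D := by
        ext a
        simp only [mem_sdiff, mem_compl, hmemD a]
      rw [hACB, hDw]
    · omega
end

section
/- Let V be a finite set, R a finite laminar family of subsets of V, and S ⊆ V. If 1 ≤ |R(S)| ≤ |R(V\S)|, then for every R ∈ R(S) we have V \ (R ∪ S) ≠ ∅. -/
open Finset

/-- A family of sets is laminar if any two members are either disjoint or nested. -/
def LaminarF {V : Type*} (F : Finset (Finset V)) : Prop :=
  ∀ A ∈ F, ∀ B ∈ F, Disjoint A B ∨ A ⊆ B ∨ B ⊆ A

/-- `R(S)`: the members of the family `R` that overlap `S`, i.e. those `A ∈ R` with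
`A ∩ S`, `A \ S` and `S \ A` all nonempty. -/
def overlapFam {V : Type*} [DecidableEq V] (R : Finset (Finset V)) (S : Finset V) :
    Finset (Finset V) :=
  R.filter fun A => (A ∩ S).Nonempty ∧ (A \ S).Nonempty ∧ (S \ A).Nonempty

/-- Lemma 3.6: if `1 ≤ |R(S)| ≤ |R(V \ S)|` for a laminar family `R`, then
`V \ (R' ∪ S) ≠ ∅` for every `R' ∈ R(S)`. -/
theorem overlapped_union_not_all
    {V : Type*} [Fintype V] [DecidableEq V]
    (R : Finset (Finset V)) (hlam : LaminarF R) (S : Finset V)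
    (h1 : 1 ≤ (overlapFam R S).card)
    (h2 : (overlapFam R S).card ≤ (overlapFam R Sᶜ).card) :
    ∀ A ∈ overlapFam R S, ((A ∪ S)ᶜ).Nonempty := by
  intro A hA
  by_contra hne
  rw [not_nonempty_iff_eq_empty] at hne
  -- Sᶜ ⊆ A
  have hScA : Sᶜ ⊆ A := by
    intro x hx
    have hxu : x ∈ A ∪ S := by
      by_contra hxn
      exact absurd hne (by simp [eq_empty_iff_forall_notMem]; exact ⟨x, by simpa using hxn⟩)
    rcases mem_union.1 hxu with h | h
    · exact h
    · exact absurd h (by simpa using hx)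
  have hA' := mem_filter.1 hA
  obtain ⟨hAR, hAS, hAsS, hSsA⟩ : _ ∧ _ ∧ _ ∧ _ := ⟨hA'.1, hA'.2.1, hA'.2.2.1, hA'.2.2.2⟩
  -- every B ∈ R(Sᶜ) is in R(S) \ {A}
  have hsub : overlapFam R Sᶜ ⊆ (overlapFam R S).erase A := by
    intro B hB
    have hB' := mem_filter.1 hB
    obtain ⟨hBR, hB1, hB2, hB3⟩ : _ ∧ _ ∧ _ ∧ _ := ⟨hB'.1, hB'.2.1, hB'.2.2.1, hB'.2.2.2⟩
    -- hB1 : (B ∩ Sᶜ).Nonempty, hB2 : (B \ Sᶜ).Nonempty, hB3 : (Sᶜ \ B).Nonempty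
    have hBneA : B ≠ A := by
      rintro rfl
      obtain ⟨x, hx⟩ := hB3
      rw [mem_sdiff] at hx
      exact hx.2 (hScA hx.1)
    have hnd : ¬ Disjoint A B := by
      obtain ⟨x, hx⟩ := hB1
      rw [mem_inter] at hx
      intro hd
      have := Finset.disjoint_left.1 hd (hScA hx.2) hx.1
      exact this
    have hBA : B ⊆ A := by
      rcases hlam A hAR B hBR with h | h | h
      · exact absurd h hnd
      · exfalso
        obtain ⟨x, hx⟩ := hB3
        rw [mem_sdiff] at hx
        exact hx.2 (h (hScA hx.1))
      · exact h
    refine mem_erase.2 ⟨hBneA, mem_filter.2 ⟨hBR, ?_, ?_, ?_⟩⟩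
    · obtain ⟨x, hx⟩ := hB2
      rw [mem_sdiff, mem_compl, not_not] at hx
      exact ⟨x, mem_inter.2 ⟨hx.1, hx.2⟩⟩
    · obtain ⟨x, hx⟩ := hB1
      rw [mem_inter, mem_compl] at hx
      exact ⟨x, mem_sdiff.2 ⟨hx.1, hx.2⟩⟩
    · obtain ⟨x, hx⟩ := hSsA
      rw [mem_sdiff] at hx
      exact ⟨x, mem_sdiff.2 ⟨hx.1, fun hxB => hx.2 (hBA hxB)⟩⟩
  have hAin : A ∈ overlapFam R S := hA
  have hcard : (overlapFam R Sᶜ).card ≤ (overlapFam R S).card - 1 := by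
    calc (overlapFam R Sᶜ).card ≤ ((overlapFam R S).erase A).card := card_le_card hsub
      _ = (overlapFam R S).card - 1 := card_erase_of_mem hAin
  omega
end
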